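/- Let S ⊆ ℤ² be finite, B = {(i,j) ∈ S : i ≡ j mod 2}, W = S \ B. Define E = {b ∈ B : b-(0,1) ∉ W}, I = {b ∈ B : b-(0,1) ∈ W}, X = {b ∈ ℤ² \ B : b-(0,1) ∈ W}. Then there is a bijection between the set of domino tilings of S (partitions of S into pairs of adjacent cells) and the set of families of vertex-disjoint paths with steps from {(1,1),(0,2),(-1,1)} that connect each point of E to a point of X, passing only through points of I, with every point of E and of X used by exactly one path. -/

import Mathlib

/-- The black cells of `S`: those `(i,j) ∈ S` with `i ≡ j (mod 2)`. -/
def Bset (S : Finset (ℤ × ℤ)) : Set (ℤ × ℤ) := {p | p ∈ S ∧ p.1 ≡ p.2 [ZMOD 2]}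

/-- The white cells of `S`. -/
def Wset (S : Finset (ℤ × ℤ)) : Set (ℤ × ℤ) := {p | p ∈ S ∧ ¬ p.1 ≡ p.2 [ZMOD 2]}

/-- Entries: black cells of `S` whose left neighbour is not a white cell of `S`. -/
def Eset (S : Finset (ℤ × ℤ)) : Set (ℤ × ℤ) :=
  {b | b ∈ Bset S ∧ b - (0, 1) ∉ Wset S}

/-- Interior edges: black cells of `S` whose left neighbour is a white cell of `S`. -/
def Iset (S : Finset (ℤ × ℤ)) : Set (ℤ × ℤ) :=
  {b | b ∈ Bset S ∧ b - (0, 1) ∈ Wset S}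

/-- Exits: non-black cells whose left neighbour is a white cell of `S`. -/
def Xset (S : Finset (ℤ × ℤ)) : Set (ℤ × ℤ) :=
  {b | b ∉ Bset S ∧ b - (0, 1) ∈ Wset S}

/-- Two cells are adjacent if they differ by `(±1,0)` or `(0,±1)`. -/
def Adj (x y : ℤ × ℤ) : Prop :=
  y - x = (1, 0) ∨ y - x = (-1, 0) ∨ y - x = (0, 1) ∨ y - x = (0, -1)

/-- A domino tiling of `S`: a collection of pairs of adjacent cells of `S`
covering each cell of `S` exactly once. -/
def IsDominoTiling (S : Finset (ℤ × ℤ)) (T : Finset (Finset (ℤ × ℤ))) : Prop :=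
  (∀ D ∈ T, ∃ x y : ℤ × ℤ, Adj x y ∧ D = {x, y}) ∧
  (∀ D ∈ T, D ⊆ S) ∧
  (∀ s ∈ S, ∃! D, D ∈ T ∧ s ∈ D)

/-- A path with steps from `{(1,1), (0,2), (-1,1)}`. -/
def IsAztecPath (p : List (ℤ × ℤ)) : Prop :=
  p.Chain' fun u v => v - u = (1, 1) ∨ v - u = (0, 2) ∨ v - u = (-1, 1)

/-- A family of vertex-disjoint paths with steps from `{(1,1),(0,2),(-1,1)}` connecting
each entry of `Eset S` to an exit of `Xset S`, passing only through `Iset S`, every entry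
and every exit being used by exactly one path. -/
def IsPathFamily (S : Finset (ℤ × ℤ)) (F : Finset (List (ℤ × ℤ))) : Prop :=
  (∀ p ∈ F, IsAztecPath p ∧
      (∃ e ∈ Eset S, p.head? = some e) ∧
      (∃ x ∈ Xset S, p.getLast? = some x) ∧
      (∀ m : ℕ, 0 < m → m + 1 < p.length →
        ∀ q : ℤ × ℤ, p[m]? = some q → q ∈ Iset S)) ∧
  (∀ p ∈ F, ∀ q ∈ F, p ≠ q → ∀ x : ℤ × ℤ, x ∈ p → x ∉ q) ∧
  (∀ e ∈ Eset S, ∃! p, p ∈ F ∧ p.head? = some e) ∧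
  (∀ x ∈ Xset S, ∃! p, p ∈ F ∧ p.getLast? = some x)

namespace DPaux

/-- black parity -/
def Blk (p : ℤ × ℤ) : Prop := p.1 ≡ p.2 [ZMOD 2]

lemma blk_iff (p : ℤ × ℤ) : Blk p ↔ p.1 % 2 = p.2 % 2 := Iff.rfl

lemma adj_parity {x y : ℤ × ℤ} (h : Adj x y) : Blk x ↔ ¬ Blk y := by
  obtain ⟨a, b⟩ := x; obtain ⟨c, d⟩ := y
  simp only [Adj, Prod.mk_sub_mk, Prod.mk.injEq] at h
  simp only [Blk, Int.ModEq]
  rcases h with ⟨h1, h2⟩ | ⟨h1, h2⟩ | ⟨h1, h2⟩ | ⟨h1, h2⟩ <;> omega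

lemma left_parity {x : ℤ × ℤ} : Blk x ↔ ¬ Blk (x - (0,1)) := by
  have : Adj (x - (0,1)) x := Or.inr (Or.inr (Or.inl (sub_sub_cancel x (0,1))))
  have := adj_parity this
  tauto

lemma mem_B {S : Finset (ℤ × ℤ)} {p} : p ∈ Bset S ↔ p ∈ S ∧ Blk p := Iff.rfl
lemma mem_W {S : Finset (ℤ × ℤ)} {p} : p ∈ Wset S ↔ p ∈ S ∧ ¬ Blk p := Iff.rfl

/-- for black-parity b, left nbr is in `Wset S` iff it's in `S`. -/
lemma left_mem_W {S : Finset (ℤ × ℤ)} {b : ℤ × ℤ} (hb : Blk b) :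
    b - (0,1) ∈ Wset S ↔ b - (0,1) ∈ S := by
  rw [mem_W]
  have := left_parity.mp hb
  tauto

lemma mem_E {S : Finset (ℤ × ℤ)} {b} :
    b ∈ Eset S ↔ b ∈ S ∧ Blk b ∧ b - (0,1) ∉ S := by
  constructor
  · rintro ⟨⟨h1, h2⟩, h3⟩
    exact ⟨h1, h2, fun hm => h3 ((left_mem_W h2).mpr hm)⟩
  · rintro ⟨h1, h2, h3⟩
    exact ⟨⟨h1, h2⟩, fun hm => h3 ((left_mem_W h2).mp hm)⟩

lemma mem_I {S : Finset (ℤ × ℤ)} {b} :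
    b ∈ Iset S ↔ b ∈ S ∧ Blk b ∧ b - (0,1) ∈ S := by
  constructor
  · rintro ⟨⟨h1, h2⟩, h3⟩
    exact ⟨h1, h2, (left_mem_W h2).mp h3⟩
  · rintro ⟨h1, h2, h3⟩
    exact ⟨⟨h1, h2⟩, (left_mem_W h2).mpr h3⟩

lemma mem_X {S : Finset (ℤ × ℤ)} {b} :
    b ∈ Xset S ↔ b ∉ S ∧ Blk b ∧ b - (0,1) ∈ S := by
  have hW : ∀ h2 : Blk b, (b - (0,1) ∈ Wset S ↔ b - (0,1) ∈ S) := fun h2 => left_mem_W h2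
  constructor
  · rintro ⟨h1, h3⟩
    have hb : Blk b := by
      have := (mem_W.mp h3).2
      have h := left_parity (x := b)
      tauto
    refine ⟨fun hin => h1 ⟨hin, hb⟩, hb, (hW hb).mp h3⟩
  · rintro ⟨h1, h2, h3⟩
    exact ⟨fun hB => h1 hB.1, (hW h2).mpr h3⟩

end DPaux

namespace DPaux

variable {S : Finset (ℤ × ℤ)} {T : Finset (Finset (ℤ × ℤ))}

open Classical in
/-- the partner of a cell in a tiling -/
noncomputable def mate (T : Finset (Finset (ℤ × ℤ))) (s : ℤ × ℤ) : ℤ × ℤ :=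
  if h : ∃ t, t ≠ s ∧ ({s, t} : Finset (ℤ × ℤ)) ∈ T then h.choose else s - (0,1)

lemma mate_spec (hT : IsDominoTiling S T) {s : ℤ × ℤ} (hs : s ∈ S) :
    mate T s ≠ s ∧ ({s, mate T s} : Finset (ℤ × ℤ)) ∈ T := by
  obtain ⟨D, ⟨hD, hsD⟩, _⟩ := hT.2.2 s hs
  obtain ⟨x, y, hxy, rfl⟩ := hT.1 D hD
  have hne : x ≠ y := by
    rintro rfl
    rcases hxy with h | h | h | h <;> simp_all <;>
      (exact absurd h (by simp [Prod.ext_iff]))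
  have h : ∃ t, t ≠ s ∧ ({s, t} : Finset (ℤ × ℤ)) ∈ T := by
    rcases Finset.mem_insert.mp hsD with rfl | hy
    · exact ⟨y, fun h => hne h.symm, hD⟩
    · rcases Finset.mem_singleton.mp hy with rfl
      exact ⟨x, hne, by rwa [Finset.pair_comm]⟩
  rw [mate, dif_pos h]
  exact ⟨h.choose_spec.1, h.choose_spec.2⟩

lemma mate_eq (hT : IsDominoTiling S T) {s t : ℤ × ℤ} (hs : s ∈ S) (hne : t ≠ s)
    (hst : ({s, t} : Finset (ℤ × ℤ)) ∈ T) : mate T s = t := by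
  obtain ⟨D, _, huniq⟩ := hT.2.2 s hs
  obtain ⟨hm, hmem⟩ := mate_spec hT hs
  have h1 : ({s, t} : Finset (ℤ × ℤ)) = D := huniq _ ⟨hst, by simp⟩
  have h2 : ({s, mate T s} : Finset (ℤ × ℤ)) = D := huniq _ ⟨hmem, by simp⟩
  have : mate T s ∈ ({s, t} : Finset (ℤ × ℤ)) := by
    rw [h1, ← h2]; simp
  rcases Finset.mem_insert.mp this with h | h
  · exact absurd h hm
  · exact Finset.mem_singleton.mp h

lemma mate_mem (hT : IsDominoTiling S T) {s : ℤ × ℤ} (hs : s ∈ S) : mate T s ∈ S :=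
  hT.2.1 _ (mate_spec hT hs).2 (by simp)

lemma adj_mate (hT : IsDominoTiling S T) {s : ℤ × ℤ} (hs : s ∈ S) :
    Adj s (mate T s) := by
  obtain ⟨hm, hmem⟩ := mate_spec hT hs
  obtain ⟨x, y, hxy, hD⟩ := hT.1 _ hmem
  have hsx : s ∈ ({x, y} : Finset (ℤ × ℤ)) := by rw [← hD]; simp
  have hmx : mate T s ∈ ({x, y} : Finset (ℤ × ℤ)) := by rw [← hD]; simp
  simp only [Finset.mem_insert, Finset.mem_singleton] at hsx hmx
  have hadj' : Adj y x := by
    unfold Adj at hxy ⊢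
    rw [show x - y = -(y - x) by ring]
    rcases hxy with h | h | h | h <;> rw [h] <;> norm_num [Prod.ext_iff]
  rcases hsx with rfl | rfl <;> rcases hmx with h | h
  · exact absurd h hm
  · rw [h]; exact hxy
  · rw [h]; exact hadj'
  · exact absurd h hm

lemma mate_mate (hT : IsDominoTiling S T) {s : ℤ × ℤ} (hs : s ∈ S) :
    mate T (mate T s) = s := by
  obtain ⟨hm, hmem⟩ := mate_spec hT hs
  exact mate_eq hT (mate_mem hT hs) (Ne.symm hm) (by rwa [Finset.pair_comm])

lemma mate_parity (hT : IsDominoTiling S T) {s : ℤ × ℤ} (hs : s ∈ S) :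
    (Blk (mate T s) ↔ ¬ Blk s) := by
  have := adj_parity (adj_mate hT hs); tauto

end DPaux

namespace DPaux

variable {S : Finset (ℤ × ℤ)} {T : Finset (Finset (ℤ × ℤ))}

/-- successor point of a path through black cell b -/
noncomputable def nextFn (T : Finset (Finset (ℤ × ℤ))) (b : ℤ × ℤ) : ℤ × ℤ :=
  mate T b + (0,1)

/-- b is a black cell of S not matched to its left neighbour -/
def usedP (S : Finset (ℤ × ℤ)) (T : Finset (Finset (ℤ × ℤ))) (b : ℤ × ℤ) : Prop :=
  b ∈ S ∧ Blk b ∧ mate T b ≠ b - (0,1)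

lemma step_cases (hT : IsDominoTiling S T) {b : ℤ × ℤ} (hb : usedP S T b) :
    nextFn T b - b = (1,1) ∨ nextFn T b - b = (0,2) ∨ nextFn T b - b = (-1,1) := by
  obtain ⟨hbS, _, hne⟩ := hb
  have h := adj_mate hT hbS
  unfold Adj at h
  unfold nextFn
  rcases h with h | h | h | h
  · left; rw [show mate T b + (0,1) - b = (mate T b - b) + (0,1) by ring, h]; rfl
  · right; right; rw [show mate T b + (0,1) - b = (mate T b - b) + (0,1) by ring, h]; rfl
  · right; left; rw [show mate T b + (0,1) - b = (mate T b - b) + (0,1) by ring, h]; rfl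
  · exfalso; apply hne; have : mate T b = b + (0,-1) := by linear_combination h
    rw [this]; apply Prod.ext <;> simp <;> ring

lemma col_lt_next (hT : IsDominoTiling S T) {b : ℤ × ℤ} (hb : usedP S T b) :
    b.2 < (nextFn T b).2 := by
  rcases step_cases hT hb with h | h | h <;>
  · have := congrArg Prod.snd h; simp at this; omega

lemma blk_next (hT : IsDominoTiling S T) {b : ℤ × ℤ} (hb : usedP S T b) :
    Blk (nextFn T b) := by
  rcases step_cases hT hb with h | h | h <;>
  · obtain ⟨x, y⟩ := b; obtain ⟨hbS, hblk, _⟩ := hb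
    have h1 := congrArg Prod.fst h; have h2 := congrArg Prod.snd h
    simp at h1 h2
    simp only [Blk, Int.ModEq] at hblk ⊢
    omega

lemma next_left_mem (hT : IsDominoTiling S T) {b : ℤ × ℤ} (hb : usedP S T b) :
    nextFn T b - (0,1) ∈ Wset S := by
  have : nextFn T b - (0,1) = mate T b := by unfold nextFn; ring
  rw [this, mem_W]
  exact ⟨mate_mem hT hb.1, fun h => ((mate_parity hT hb.1).mp h) hb.2.1⟩

lemma next_ne (hT : IsDominoTiling S T) {b : ℤ × ℤ} (hb : usedP S T b) :
    nextFn T b ≠ b := fun h => by have := col_lt_next hT hb; rw [h] at this; omega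

lemma used_next (hT : IsDominoTiling S T) {b : ℤ × ℤ} (hb : usedP S T b)
    (hmem : nextFn T b ∈ S) : usedP S T (nextFn T b) := by
  refine ⟨hmem, blk_next hT hb, fun h => ?_⟩
  have hm : nextFn T b - (0,1) = mate T b := by unfold nextFn; ring
  rw [hm] at h
  have h3 := mate_mate hT hmem
  rw [h, mate_mate hT hb.1] at h3
  exact next_ne hT hb h3.symm

lemma next_inj (hT : IsDominoTiling S T) {b b' : ℤ × ℤ} (hb : usedP S T b)
    (hb' : usedP S T b') (h : nextFn T b = nextFn T b') : b = b' := by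
  have : mate T b = mate T b' := by
    unfold nextFn at h
    exact add_right_cancel h
  calc b = mate T (mate T b) := (mate_mate hT hb.1).symm
    _ = mate T (mate T b') := by rw [this]
    _ = b' := mate_mate hT hb'.1

/-- entries are used -/
lemma entry_used (hT : IsDominoTiling S T) {e : ℤ × ℤ} (he : e ∈ Eset S) :
    usedP S T e := by
  obtain ⟨heS, hblk, hleft⟩ := mem_E.mp he
  exact ⟨heS, hblk, fun h => hleft (h ▸ mate_mem hT heS)⟩

/-- a used point's successor is never an entry -/
lemma next_not_entry (hT : IsDominoTiling S T) {b : ℤ × ℤ} (hb : usedP S T b) :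
    nextFn T b ∉ Eset S := by
  intro h
  exact (mem_E.mp h).2.2 ((mem_W.mp (next_left_mem hT hb)).1)

/-- iterates of nextFn -/
noncomputable def pt (T : Finset (Finset (ℤ × ℤ))) (e : ℤ × ℤ) (i : ℕ) : ℤ × ℤ :=
  (nextFn T)^[i] e

lemma pt_zero : pt T e 0 = e := rfl
lemma pt_succ (i : ℕ) : pt T e (i+1) = nextFn T (pt T e i) :=
  Function.iterate_succ_apply' _ _ _

lemma used_upto (hT : IsDominoTiling S T) {e : ℤ × ℤ} (he : e ∈ Eset S) :
    ∀ i, (∀ j ≤ i, pt T e j ∈ S) → usedP S T (pt T e i) := by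
  intro i
  induction i with
  | zero => intro _; exact entry_used hT he
  | succ n ih =>
    intro h
    rw [pt_succ]
    exact used_next hT (ih (fun j hj => h j (by omega))) (by rw [← pt_succ]; exact h (n+1) le_rfl)

lemma exits_exist (hT : IsDominoTiling S T) {e : ℤ × ℤ} (he : e ∈ Eset S) :
    ∃ k, pt T e k ∉ S := by
  by_contra hc
  push_neg at hc
  have hused : ∀ i, usedP S T (pt T e i) := fun i =>
    used_upto hT he i (fun j _ => hc j)
  have hmono : StrictMono (fun i => (pt T e i).2) := by
    apply strictMono_nat_of_lt_succ
    intro n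
    rw [pt_succ]
    exact col_lt_next hT (hused n)
  have hinj : Function.Injective (fun i => pt T e i) := fun i j hij => by
    by_contra hne
    simp only at hij
    rcases Nat.lt_or_ge i j with h | h
    · have h2 := hmono h; simp only [hij] at h2; omega
    · have hj : j < i := by omega
      have h2 := hmono hj; simp only [hij] at h2; omega
  exact Set.not_infinite.mpr S.finite_toSet
    (Set.infinite_of_injective_forall_mem hinj (fun i => hc i))

open Classical in
/-- first exit time -/
noncomputable def exitT (S : Finset (ℤ × ℤ)) (T : Finset (Finset (ℤ × ℤ))) (e : ℤ × ℤ) : ℕ :=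
  if h : ∃ k, pt T e k ∉ S then Nat.find h else 0

lemma exitT_spec (h : ∃ k, pt T e k ∉ S) :
    pt T e (exitT S T e) ∉ S ∧ ∀ j < exitT S T e, pt T e j ∈ S := by
  rw [exitT, dif_pos h]
  exact ⟨Nat.find_spec h, fun j hj => by_contra fun hc => Nat.find_min h hj hc⟩

lemma exitT_eq (h : ∃ k, pt T e k ∉ S) {k : ℕ} (hk : pt T e k ∉ S)
    (hmin : ∀ j < k, pt T e j ∈ S) : exitT S T e = k := by
  rw [exitT, dif_pos h]
  have h1 := Nat.find_min' h hk
  rcases Nat.lt_or_ge (Nat.find h) k with h2 | h2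
  · exact absurd (hmin _ h2) (Nat.find_spec h)
  · omega

/-- the path from an entry -/
noncomputable def pathT (S : Finset (ℤ × ℤ)) (T : Finset (Finset (ℤ × ℤ))) (e : ℤ × ℤ) :
    List (ℤ × ℤ) :=
  (List.range (exitT S T e + 1)).map (pt T e)

lemma pathT_length : (pathT S T e).length = exitT S T e + 1 := by
  simp [pathT]

lemma pathT_get {i : ℕ} (hi : i < exitT S T e + 1) :
    (pathT S T e)[i]? = some (pt T e i) := by
  rw [pathT]
  rw [List.getElem?_map, List.getElem?_range hi]
  rfl

lemma pathT_head : (pathT S T e).head? = some e := by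
  have h : (0:ℕ) < exitT S T e + 1 := by omega
  have := pathT_get (e := e) (S := S) (T := T) h
  rw [pt_zero] at this
  rwa [List.head?_eq_getElem?]

lemma pathT_getLast : (pathT S T e).getLast? = some (pt T e (exitT S T e)) := by
  rw [List.getLast?_eq_getElem?, pathT_length]
  simp only [Nat.add_sub_cancel]
  exact pathT_get (by omega)

lemma pathT_mem {x : ℤ × ℤ} : x ∈ pathT S T e ↔ ∃ i ≤ exitT S T e, pt T e i = x := by
  simp only [pathT, List.mem_map, List.mem_range]
  constructor
  · rintro ⟨i, hi, rfl⟩; exact ⟨i, by omega, rfl⟩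
  · rintro ⟨i, hi, rfl⟩; exact ⟨i, by omega, rfl⟩

end DPaux

namespace DPaux

variable {S : Finset (ℤ × ℤ)} {T : Finset (Finset (ℤ × ℤ))} {e e' : ℤ × ℤ}

/-- trace-back: iterates from two entries can only collide if the entries coincide -/
lemma trace_back (hT : IsDominoTiling S T) (he : e ∈ Eset S) (he' : e' ∈ Eset S) :
    ∀ i j, (∀ j' < i, pt T e j' ∈ S) → (∀ j' < j, pt T e' j' ∈ S) →
    pt T e i = pt T e' j → i = j ∧ e = e' := by
  intro i
  induction i with
  | zero =>
    intro j _ hj heq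
    rcases j with _ | j'
    · exact ⟨rfl, heq⟩
    · exfalso
      rw [pt_succ] at heq
      have hu : usedP S T (pt T e' j') :=
        used_upto hT he' j' (fun k hk => hj k (by omega))
      have : pt T e 0 ∉ Eset S := heq ▸ next_not_entry hT hu
      exact this he
  | succ n ih =>
    intro j hi hj heq
    rcases j with _ | j'
    · exfalso
      rw [pt_succ] at heq
      have hu : usedP S T (pt T e n) :=
        used_upto hT he n (fun k hk => hi k (by omega))
      have : pt T e' 0 ∉ Eset S := heq ▸ next_not_entry hT hu
      exact this he'
    · rw [pt_succ, pt_succ] at heq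
      have hu : usedP S T (pt T e n) :=
        used_upto hT he n (fun k hk => hi k (by omega))
      have hu' : usedP S T (pt T e' j') :=
        used_upto hT he' j' (fun k hk => hj k (by omega))
      have heq' := next_inj hT hu hu' heq
      obtain ⟨h1, h2⟩ := ih j' (fun k hk => hi k (by omega)) (fun k hk => hj k (by omega)) heq'
      exact ⟨by omega, h2⟩

open Classical in
/-- the path family associated to a tiling -/
noncomputable def famT (S : Finset (ℤ × ℤ)) (T : Finset (Finset (ℤ × ℤ))) :
    Finset (List (ℤ × ℤ)) :=
  (S.filter (fun b => b ∈ Eset S)).image (pathT S T)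

lemma mem_famT {p : List (ℤ × ℤ)} :
    p ∈ famT S T ↔ ∃ e ∈ Eset S, p = pathT S T e := by
  classical
  simp only [famT, Finset.mem_image, Finset.mem_filter]
  constructor
  · rintro ⟨e, ⟨_, he⟩, rfl⟩; exact ⟨e, he, rfl⟩
  · rintro ⟨e, he, rfl⟩; exact ⟨e, ⟨(mem_E.mp he).1, he⟩, rfl⟩

section PathProps

variable (hT : IsDominoTiling S T) (he : e ∈ Eset S)
include hT he

lemma exitT_pos : 0 < exitT S T e := by
  rcases Nat.eq_zero_or_pos (exitT S T e) with h | h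
  · exfalso
    have := (exitT_spec (exits_exist hT he)).1
    rw [h, pt_zero] at this
    exact this (mem_E.mp he).1
  · exact h

lemma pt_mem_S {i : ℕ} (hi : i < exitT S T e) : pt T e i ∈ S :=
  (exitT_spec (exits_exist hT he)).2 i hi

lemma pt_used {i : ℕ} (hi : i < exitT S T e) : usedP S T (pt T e i) :=
  used_upto hT he i (fun j hj => pt_mem_S hT he (by omega))

lemma pathT_aztec : IsAztecPath (pathT S T e) := by
  rw [IsAztecPath, pathT]
  show List.IsChain _ _
  rw [List.isChain_map, List.isChain_range_succ]
  intro i hi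
  simp only [Nat.succ_eq_add_one, pt_succ]
  exact step_cases hT (pt_used hT he hi)

lemma pathT_last_mem_X : pt T e (exitT S T e) ∈ Xset S := by
  have hk := exitT_pos hT he
  have h1 : pt T e (exitT S T e) ∉ S := (exitT_spec (exits_exist hT he)).1
  obtain ⟨m, hm⟩ : ∃ m, exitT S T e = m + 1 := ⟨exitT S T e - 1, by omega⟩
  rw [hm, pt_succ]
  have hu := pt_used hT he (i := m) (by omega)
  rw [mem_X]
  rw [hm, pt_succ] at h1
  exact ⟨h1, blk_next hT hu, (mem_W.mp (next_left_mem hT hu)).1⟩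

lemma pt_interior_mem_I {m : ℕ} (hm : 0 < m) (hm2 : m < exitT S T e) :
    pt T e m ∈ Iset S := by
  obtain ⟨i, rfl⟩ : ∃ i, m = i + 1 := ⟨m - 1, by omega⟩
  have hu := pt_used hT he (i := i) (by omega)
  rw [mem_I, pt_succ]
  exact ⟨by rw [← pt_succ]; exact pt_mem_S hT he hm2, blk_next hT hu,
    (mem_W.mp (next_left_mem hT hu)).1⟩

end PathProps

/-- back-tracing: every used cell is on a path from an entry -/
lemma back_trace (hT : IsDominoTiling S T) :
    ∀ (n : ℕ) (c : ℤ × ℤ), usedP S T c →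
      (S.filter (fun s => s.2 ≤ c.2)).card ≤ n →
      ∃ e k, e ∈ Eset S ∧ pt T e k = c ∧ ∀ j ≤ k, pt T e j ∈ S := by
  classical
  intro n
  induction n with
  | zero =>
    intro c hc hcard
    exfalso
    have : c ∈ S.filter (fun s => s.2 ≤ c.2) := Finset.mem_filter.mpr ⟨hc.1, le_rfl⟩
    have := Finset.card_pos.mpr ⟨c, this⟩
    omega
  | succ n ih =>
    intro c hc hcard
    by_cases hE : c ∈ Eset S
    · exact ⟨c, 0, hE, rfl, fun j hj => by rw [Nat.le_zero.mp hj]; exact hc.1⟩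
    · -- c ∈ I; step backwards
      have hcI : c - (0,1) ∈ S := by
        by_contra hnot
        exact hE (mem_E.mpr ⟨hc.1, hc.2.1, hnot⟩)
      set w := c - (0,1) with hw
      set c' := mate T w with hc'
      have hwS : w ∈ S := hcI
      have hc'S : c' ∈ S := mate_mem hT hwS
      have hwblk : ¬ Blk w := left_parity.mp hc.2.1
      have hc'blk : Blk c' := by
        have := mate_parity hT hwS; tauto
      have hmc : mate T c' = w := by rw [hc', mate_mate hT hwS]
      have hc'ne : c' ≠ c := by
        intro h
        apply hc.2.2
        rw [← h, hmc, h, hw]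
      have hused' : usedP S T c' := by
        refine ⟨hc'S, hc'blk, fun h => ?_⟩
        rw [hmc] at h
        apply hc'ne
        have : c' = w + (0,1) := by rw [h]; ring
        rw [this, hw]; ring
      have hnext : nextFn T c' = c := by
        rw [nextFn, hmc, hw]; ring
      have hcol : c'.2 < c.2 := by
        have hadj := adj_mate hT hwS
        rw [← hc'] at hadj
        have h2 : c' ≠ w + (0,1) := by
          intro h; apply hc'ne; rw [h, hw]; ring
        unfold Adj at hadj
        rcases hadj with h | h | h | h
        · have := congrArg Prod.snd h; simp at this
          have : c'.2 = w.2 := by omega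
          simp [hw] at this ⊢; omega
        · have := congrArg Prod.snd h; simp at this
          have : c'.2 = w.2 := by omega
          simp [hw] at this ⊢; omega
        · exfalso; apply h2
          have : c' = w + (0,1) := by linear_combination h
          exact this
        · have := congrArg Prod.snd h; simp at this
          have : c'.2 = w.2 - 1 := by omega
          simp [hw] at this ⊢; omega
      have hsub : S.filter (fun s => s.2 ≤ c'.2) ⊂ S.filter (fun s => s.2 ≤ c.2) := by
        refine Finset.ssubset_iff_of_subset ?_ |>.mpr ⟨c, Finset.mem_filter.mpr ⟨hc.1, le_rfl⟩, ?_⟩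
        · intro x hx
          rw [Finset.mem_filter] at hx ⊢
          exact ⟨hx.1, by omega⟩
        · rw [Finset.mem_filter]
          push_neg
          intro _; omega
      have hcard' : (S.filter (fun s => s.2 ≤ c'.2)).card ≤ n := by
        have := Finset.card_lt_card hsub
        omega
      obtain ⟨e, k, heE, hk, hall⟩ := ih c' hused' hcard'
      refine ⟨e, k + 1, heE, ?_, ?_⟩
      · rw [pt_succ, hk, hnext]
      · intro j hj
        rcases Nat.lt_or_ge j (k+1) with h | h
        · exact hall j (by omega)
        · have : j = k + 1 := by omega
          rw [this, pt_succ, hk, hnext]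
          exact hc.1

end DPaux

namespace DPaux

variable {S : Finset (ℤ × ℤ)} {T : Finset (Finset (ℤ × ℤ))} {e e' : ℤ × ℤ}

theorem famT_isPathFamily (hT : IsDominoTiling S T) : IsPathFamily S (famT S T) := by
  refine ⟨?_, ?_, ?_, ?_⟩
  · -- individual path properties
    intro p hp
    obtain ⟨e, he, rfl⟩ := mem_famT.mp hp
    refine ⟨pathT_aztec hT he, ⟨e, he, pathT_head⟩,
      ⟨pt T e (exitT S T e), pathT_last_mem_X hT he, pathT_getLast⟩, ?_⟩
    intro m hm hm2 q hq
    rw [pathT_length] at hm2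
    have hmlt : m < exitT S T e := by omega
    rw [pathT_get (by omega)] at hq
    obtain rfl : pt T e m = q := by injection hq
    exact pt_interior_mem_I hT he hm hmlt
  · -- disjointness
    intro p hp q hq hpq x hxp hxq
    obtain ⟨e, he, rfl⟩ := mem_famT.mp hp
    obtain ⟨e', he', rfl⟩ := mem_famT.mp hq
    obtain ⟨i, hi, hix⟩ := pathT_mem.mp hxp
    obtain ⟨j, hj, hjx⟩ := pathT_mem.mp hxq
    have heq : pt T e i = pt T e' j := by rw [hix, hjx]
    obtain ⟨-, rfl⟩ := trace_back hT he he' i j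
      (fun k hk => pt_mem_S hT he (by omega)) (fun k hk => pt_mem_S hT he' (by omega)) heq
    exact hpq rfl
  · -- unique path per entry
    intro e he
    refine ⟨pathT S T e, ⟨mem_famT.mpr ⟨e, he, rfl⟩, pathT_head⟩, ?_⟩
    rintro p ⟨hp, hhead⟩
    obtain ⟨e', he', rfl⟩ := mem_famT.mp hp
    have : e' = e := by
      have := pathT_head (S := S) (T := T) (e := e')
      rw [hhead] at this
      injection this with h
      exact h.symm
    rw [this]
  · -- unique path per exit
    intro x hx
    obtain ⟨hxS, hxblk, hxleft⟩ := mem_X.mp hx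
    set w := x - (0,1) with hw
    set c := mate T w with hc
    have hwS : w ∈ S := hxleft
    have hwblk : ¬ Blk w := left_parity.mp hxblk
    have hcS : c ∈ S := mate_mem hT hwS
    have hcblk : Blk c := by have := mate_parity hT hwS; tauto
    have hmc : mate T c = w := by rw [hc, mate_mate hT hwS]
    have hcne : c ≠ x := fun h => hxS (h ▸ hcS)
    have hcused : usedP S T c := by
      refine ⟨hcS, hcblk, fun h => ?_⟩
      rw [hmc] at h
      apply hcne
      have : c = w + (0,1) := by rw [h]; ring
      rw [this, hw]; ring
    have hnext : nextFn T c = x := by rw [nextFn, hmc, hw]; ring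
    obtain ⟨e, k, heE, hk, hall⟩ := back_trace hT _ c hcused le_rfl
    have hexit : exitT S T e = k + 1 := by
      apply exitT_eq (exits_exist hT heE)
      · rw [pt_succ, hk, hnext]; exact hxS
      · intro j hj; exact hall j (by omega)
    have hlast : (pathT S T e).getLast? = some x := by
      rw [pathT_getLast, hexit, pt_succ, hk, hnext]
    refine ⟨pathT S T e, ⟨mem_famT.mpr ⟨e, heE, rfl⟩, hlast⟩, ?_⟩
    rintro p ⟨hp, hplast⟩
    obtain ⟨e', he', rfl⟩ := mem_famT.mp hp
    have hlast' : pt T e' (exitT S T e') = x := by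
      have := pathT_getLast (S := S) (T := T) (e := e')
      rw [hplast] at this
      injection this with h
      exact h.symm
    have heq : pt T e' (exitT S T e') = pt T e (exitT S T e) := by
      rw [hlast']
      rw [hexit, pt_succ, hk, hnext]
    obtain ⟨-, rfl⟩ := trace_back hT he' heE _ _
      (fun j hj => pt_mem_S hT he' hj) (fun j hj => pt_mem_S hT heE hj) heq
    rfl

end DPaux

namespace DPaux

variable {S : Finset (ℤ × ℤ)} {F : Finset (List (ℤ × ℤ))}

section Fam

variable (hF : IsPathFamily S F) {p p' : List (ℤ × ℤ)} (hp : p ∈ F)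
include hF hp

lemma path_pos : 0 < p.length := by
  obtain ⟨e, _, hh⟩ := (hF.1 p hp).2.1
  cases p with
  | nil => simp at hh
  | cons a l => simp

lemma path_steps {i : ℕ} (hi : i + 1 < p.length) :
    p[i+1] - p[i] = (1,1) ∨ p[i+1] - p[i] = (0,2) ∨ p[i+1] - p[i] = (-1,1) := by
  have hch := (hF.1 p hp).1
  rw [IsAztecPath] at hch
  change List.IsChain _ _ at hch
  rw [List.isChain_iff_getElem] at hch
  have := hch i (by omega)
  simpa [List.get_eq_getElem] using this

lemma path_col {i j : ℕ} (hij : i < j) (hj : j < p.length) : p[i].2 < p[j].2 := by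
  induction j with
  | zero => omega
  | succ m ih =>
    have hstep := path_steps hF hp (i := m) (by omega)
    have hcol : p[m].2 < p[m+1].2 := by
      rcases hstep with h | h | h <;>
      · have := congrArg Prod.snd h; simp at this; omega
    rcases Nat.lt_or_ge i m with h | h
    · have := ih (by omega) (by omega); omega
    · have : i = m := by omega
      subst this; omega

lemma path_nodup : p.Nodup := by
  rw [List.nodup_iff_injective_get]
  rintro ⟨i, hi⟩ ⟨j, hj⟩ hij
  simp only [List.get_eq_getElem] at hij
  rcases Nat.lt_trichotomy i j with h | h | h
  · have := path_col hF hp h hj; rw [hij] at this; omega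
  · simpa using h
  · have := path_col hF hp h hi; rw [hij] at this; omega

lemma path_head_mem : p[0]'(path_pos hF hp) ∈ Eset S := by
  obtain ⟨e, he, hh⟩ := (hF.1 p hp).2.1
  have h0 : 0 < p.length := path_pos hF hp
  have hh2 : p.head? = p[0]? := by
    cases p with
    | nil => simp at h0
    | cons a l => simp
  rw [hh2, List.getElem?_eq_getElem h0] at hh
  have : p[0]'h0 = e := by injection hh
  rw [this]
  exact he

lemma path_last_mem : p[p.length - 1]'(by have := path_pos hF hp; omega) ∈ Xset S := by
  obtain ⟨x, hx, hh⟩ := (hF.1 p hp).2.2.1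
  have h0 : p.length - 1 < p.length := by have := path_pos hF hp; omega
  rw [List.getLast?_eq_getElem?, List.getElem?_eq_getElem h0] at hh
  have : p[p.length - 1]'h0 = x := by injection hh
  rw [this]
  exact hx

lemma path_interior {m : ℕ} (h1 : 0 < m) (h2 : m + 1 < p.length) :
    p[m] ∈ Iset S := by
  apply (hF.1 p hp).2.2.2 m h1 h2
  rw [List.getElem?_eq_getElem (by omega)]

lemma path_blk {i : ℕ} (hi : i < p.length) : Blk p[i] := by
  induction i with
  | zero => exact (mem_E.mp (path_head_mem hF hp)).2.1
  | succ m ih =>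
    have hb := ih (by omega)
    have hstep := path_steps hF hp (i := m) (by omega)
    obtain ⟨a, b⟩ : ∃ a b, p[m] = (a, b) := ⟨_, _, rfl⟩
    rcases hstep with h | h | h <;>
    · have h1 := congrArg Prod.fst h; have h2 := congrArg Prod.snd h
      simp at h1 h2
      simp only [Blk, Int.ModEq] at hb ⊢
      omega

lemma path_len2 : 2 ≤ p.length := by
  have h0 := path_head_mem hF hp
  have hl := path_last_mem hF hp
  by_contra hc
  have h1 : p.length - 1 = 0 := by have := path_pos hF hp; omega
  simp only [h1] at hl
  exact (mem_X.mp hl).1 (mem_E.mp h0).1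

lemma path_mem_S {i : ℕ} (hi : i < p.length - 1) : p[i]'(by omega) ∈ S := by
  rcases Nat.eq_zero_or_pos i with rfl | h
  · exact (mem_E.mp (path_head_mem hF hp)).1
  · exact (mem_I.mp (path_interior hF hp h (by omega))).1

lemma path_last_not_S : p[p.length - 1]'(by have := path_pos hF hp; omega) ∉ S :=
  (mem_X.mp (path_last_mem hF hp)).1

lemma path_left_mem {i : ℕ} (h1 : 0 < i) (hi : i < p.length) :
    p[i] - (0,1) ∈ S := by
  rcases Nat.lt_or_ge i (p.length - 1) with h | h
  · exact (mem_I.mp (path_interior hF hp h1 (by omega))).2.2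
  · have : i = p.length - 1 := by omega
    subst this
    exact (mem_X.mp (path_last_mem hF hp)).2.2

lemma path_eq_of_mem {q : ℤ × ℤ} (hq : q ∈ p) (hp' : p' ∈ F) (hq' : q ∈ p') : p = p' := by
  by_contra hne
  exact hF.2.1 p hp p' hp' hne q hq hq'

lemma path_getElem_inj {i j : ℕ} (hi : i < p.length) (hj : j < p.length)
    (h : p[i] = p[j]) : i = j := by
  rcases Nat.lt_trichotomy i j with hlt | he | hlt
  · have := path_col hF hp hlt hj; rw [h] at this; omega
  · exact he
  · have := path_col hF hp hlt hi; rw [h] at this; omega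

end Fam

open Classical in
/-- position of a point in a list -/
noncomputable def idxOf (p : List (ℤ × ℤ)) (q : ℤ × ℤ) : ℕ :=
  if h : ∃ i, ∃ _ : i < p.length, p[i] = q then h.choose else 0

lemma idxOf_spec {p : List (ℤ × ℤ)} {q : ℤ × ℤ} (hq : q ∈ p) :
    ∃ h : idxOf p q < p.length, p[idxOf p q]'h = q := by
  have h : ∃ i, ∃ _ : i < p.length, p[i] = q := List.mem_iff_getElem.mp hq
  rw [idxOf, dif_pos h]
  exact h.choose_spec

end DPaux

namespace DPaux

variable {S : Finset (ℤ × ℤ)} {F : Finset (List (ℤ × ℤ))}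

open Classical in
/-- the partner of a black cell determined by a path family -/
noncomputable def partnerF (F : Finset (List (ℤ × ℤ))) (q : ℤ × ℤ) : ℤ × ℤ :=
  if h : ∃ p ∈ F, q ∈ p then
    (h.choose.getD (idxOf h.choose q + 1) (0,0)) - (0,1)
  else q - (0,1)

lemma partnerF_off {q : ℤ × ℤ} (h : ¬ ∃ p ∈ F, q ∈ p) : partnerF F q = q - (0,1) := by
  rw [partnerF, dif_neg h]

lemma partnerF_on (hF : IsPathFamily S F) {p : List (ℤ × ℤ)} (hp : p ∈ F) {i : ℕ}
    (hi : i + 1 < p.length) :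
    partnerF F (p[i]'(by omega)) = p[i+1] - (0,1) := by
  have hqmem : p[i]'(by omega) ∈ p := List.getElem_mem _
  have h : ∃ p' ∈ F, (p[i]'(by omega)) ∈ p' := ⟨p, hp, hqmem⟩
  rw [partnerF, dif_pos h]
  obtain ⟨hp', hq'⟩ := h.choose_spec
  have heq : h.choose = p := path_eq_of_mem hF hp' hq' hp hqmem
  rw [heq]
  obtain ⟨hlt, hget⟩ := idxOf_spec hqmem
  have hidx : idxOf p (p[i]'(by omega)) = i := path_getElem_inj hF hp hlt (by omega) hget
  rw [hidx, List.getD_eq_getElem _ _ hi]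

end DPaux

namespace DPaux

variable {S : Finset (ℤ × ℤ)} {F : Finset (List (ℤ × ℤ))}

lemma head_mem_of_head? {p : List (ℤ × ℤ)} {e : ℤ × ℤ} (h : p.head? = some e) : e ∈ p := by
  cases p with
  | nil => simp at h
  | cons a l => simp at h; simp [h]

lemma last_mem_of_getLast? {p : List (ℤ × ℤ)} {x : ℤ × ℤ} (h : p.getLast? = some x) :
    x ∈ p := by
  cases p with
  | nil => simp at h
  | cons a l =>
    rw [List.getLast?_eq_getLast (by simp)] at h
    have h2 := List.getLast_mem (l := a :: l) (by simp)
    exact Option.some_inj.mp h ▸ h2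

lemma entry_on_path (hF : IsPathFamily S F) {e : ℤ × ℤ} (he : e ∈ Eset S) :
    ∃ p ∈ F, e ∈ p := by
  obtain ⟨p, ⟨hp, hh⟩, -⟩ := hF.2.2.1 e he
  exact ⟨p, hp, head_mem_of_head? hh⟩

section Part

variable (hF : IsPathFamily S F)
include hF

/-- a path point lying in S is at a position before the last -/
lemma pos_not_last {p : List (ℤ × ℤ)} (hp : p ∈ F) {i : ℕ} (hi : i < p.length)
    (hS : p[i] ∈ S) : i + 1 < p.length := by
  rcases Nat.lt_or_ge (i+1) p.length with h | h
  · exact h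
  · exfalso
    have he : i = p.length - 1 := by omega
    apply path_last_not_S hF hp
    have : p[p.length - 1]'(by omega) = p[i]'hi := by congr 1; omega
    rw [this]
    exact hS

lemma partner_props {b : ℤ × ℤ} (hbS : b ∈ S) (hbB : Blk b) :
    (partnerF F b ∈ S) ∧ ¬ Blk (partnerF F b) ∧ Adj b (partnerF F b) := by
  by_cases h : ∃ p ∈ F, b ∈ p
  · obtain ⟨p, hp, hb⟩ := h
    obtain ⟨i, hlt, hget⟩ := List.mem_iff_getElem.mp hb
    have hi1 : i + 1 < p.length := pos_not_last hF hp hlt (by rwa [hget])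
    have hpartner : partnerF F b = p[i+1] - (0,1) := by
      rw [← hget]; exact partnerF_on hF hp hi1
    have hmem : partnerF F b ∈ S := by
      rw [hpartner]
      exact path_left_mem hF hp (by omega) hi1
    have hblk : Blk (p[i+1]'hi1) := path_blk hF hp hi1
    have hwhite : ¬ Blk (partnerF F b) := by
      rw [hpartner]
      exact fun hc => (left_parity.mp hblk) hc
    refine ⟨hmem, hwhite, ?_⟩
    have hstep := path_steps hF hp hi1
    have hd : partnerF F b - b = p[i+1] - p[i] - (0,1) := by
      rw [hpartner, hget]; ring
    unfold Adj
    rw [hd]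
    rcases hstep with hs | hs | hs <;> rw [hs]
    · left; apply Prod.ext <;> simp
    · right; right; left; apply Prod.ext <;> simp
    · right; left; apply Prod.ext <;> simp
  · have hpartner := partnerF_off (F := F) h
    have hbE : b ∉ Eset S := fun he => h (entry_on_path hF he)
    have hleft : b - (0,1) ∈ S := by
      by_contra hc
      exact hbE (mem_E.mpr ⟨hbS, hbB, hc⟩)
    rw [hpartner]
    refine ⟨hleft, fun hc => (left_parity.mp hbB) hc, ?_⟩
    right; right; right
    apply Prod.ext <;> simp

/-- if s = partnerF b' for b' black in S, then b' is determined by s -/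
lemma partner_inv {s b' : ℤ × ℤ} (hs : s ∈ S) (hblk : ¬ Blk s)
    (hb'S : b' ∈ S) (hb'B : Blk b') (h : s = partnerF F b') :
    (∃ p ∈ F, ∃ i, ∃ hi : i + 1 < p.length,
      p[i]'(by omega) = b' ∧ p[i+1]'hi = s + (0,1)) ∨
    ((¬ ∃ p ∈ F, b' ∈ p) ∧ b' = s + (0,1)) := by
  by_cases hb'on : ∃ p' ∈ F, b' ∈ p'
  · left
    obtain ⟨p', hp', hb'p⟩ := hb'on
    obtain ⟨j, hlt', hget'⟩ := List.mem_iff_getElem.mp hb'p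
    have hj1 : j + 1 < p'.length := pos_not_last hF hp' hlt' (by rwa [hget'])
    have hpart' := partnerF_on hF hp' hj1
    rw [hget'] at hpart'
    rw [hpart'] at h
    exact ⟨p', hp', j, hj1, hget', by rw [h]; ring⟩
  · right
    rw [partnerF_off hb'on] at h
    exact ⟨hb'on, by rw [h]; ring⟩

/-- every cell of S is covered by exactly one (black cell, partner) pair -/
theorem cover : ∀ s ∈ S, ∃! b : ℤ × ℤ,
    (b ∈ S ∧ Blk b) ∧ (s = b ∨ s = partnerF F b) := by
  intro s hs
  by_cases hblk : Blk s
  · refine ⟨s, ⟨⟨hs, hblk⟩, Or.inl rfl⟩, ?_⟩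
    rintro b ⟨⟨hbS, hbB⟩, h | h⟩
    · exact h.symm
    · exact absurd (h ▸ hblk) (partner_props hF hbS hbB).2.1
  · -- s is white
    have hrs : (s + (0,1)) - (0,1) = s := by ring
    have hrblk : Blk (s + (0,1)) := by
      by_contra hc
      exact hc (left_parity.mpr (by rwa [hrs]))
    by_cases honpath : ∃ p ∈ F, s + (0,1) ∈ p
    · -- s+(0,1) is on a path; the predecessor covers s
      obtain ⟨p, hp, hrp⟩ := honpath
      obtain ⟨i, hlt, hget⟩ := List.mem_iff_getElem.mp hrp
      have hipos : 0 < i := by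
        rcases Nat.eq_zero_or_pos i with h0 | h0
        · exfalso
          have hE := path_head_mem hF hp
          have heq0 : p[0]'(path_pos hF hp) = s + (0,1) := by
            have : p[0]'(path_pos hF hp) = p[i]'hlt := by congr 1; omega
            rw [this, hget]
          rw [heq0] at hE
          have h2 := (mem_E.mp hE).2.2
          rw [hrs] at h2
          exact h2 hs
        · exact h0
      have hi1 : (i - 1) + 1 < p.length := by omega
      have hprev : p[(i-1)+1]'hi1 = s + (0,1) := by
        have : p[(i-1)+1]'hi1 = p[i]'hlt := by congr 1; omega
        rw [this, hget]
      have hb := partnerF_on hF hp hi1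
      rw [hprev, hrs] at hb
      refine ⟨p[i-1]'(by omega), ⟨⟨path_mem_S hF hp (by omega), path_blk hF hp (by omega)⟩,
        Or.inr hb.symm⟩, ?_⟩
      rintro b' ⟨⟨hb'S, hb'B⟩, h | h⟩
      · exact absurd (h.symm ▸ hb'B) hblk
      · rcases partner_inv hF hs hblk hb'S hb'B h with
          ⟨p', hp', j, hj1, hgj, hgj1⟩ | ⟨hoff, hb'r⟩
        · have hpp : p' = p :=
            path_eq_of_mem hF hp' (hgj1 ▸ List.getElem_mem hj1) hp hrp
          subst hpp
          have hji : j + 1 = i := path_getElem_inj hF hp' hj1 hlt (by rw [hgj1, hget])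
          rw [← hgj]
          congr 1
          omega
        · exfalso
          apply hoff
          rw [hb'r]
          exact ⟨p, hp, hrp⟩
    · -- s+(0,1) not on any path: it must be in S (else it's an exit, on a path)
      have hrS : s + (0,1) ∈ S := by
        by_contra hc
        have hrX : s + (0,1) ∈ Xset S := mem_X.mpr ⟨hc, hrblk, by rwa [hrs]⟩
        obtain ⟨p, ⟨hp, hlast⟩, -⟩ := hF.2.2.2 _ hrX
        exact honpath ⟨p, hp, last_mem_of_getLast? hlast⟩
      have hpart : partnerF F (s + (0,1)) = s := by
        rw [partnerF_off honpath, hrs]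
      refine ⟨s + (0,1), ⟨⟨hrS, hrblk⟩, Or.inr hpart.symm⟩, ?_⟩
      rintro b' ⟨⟨hb'S, hb'B⟩, h | h⟩
      · exact absurd (h.symm ▸ hb'B) hblk
      · rcases partner_inv hF hs hblk hb'S hb'B h with
          ⟨p', hp', j, hj1, hgj, hgj1⟩ | ⟨hoff, hb'r⟩
        · exfalso
          exact honpath ⟨p', hp', hgj1 ▸ List.getElem_mem hj1⟩
        · exact hb'r

end Part

end DPaux

namespace DPaux

variable {S : Finset (ℤ × ℤ)} {F : Finset (List (ℤ × ℤ))}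

open Classical in
/-- the tiling associated to a path family -/
noncomputable def tilF (S : Finset (ℤ × ℤ)) (F : Finset (List (ℤ × ℤ))) :
    Finset (Finset (ℤ × ℤ)) :=
  (S.filter (fun b => Blk b)).image (fun b => ({b, partnerF F b} : Finset (ℤ × ℤ)))

lemma mem_tilF {D : Finset (ℤ × ℤ)} :
    D ∈ tilF S F ↔ ∃ b, (b ∈ S ∧ Blk b) ∧ D = {b, partnerF F b} := by
  classical
  simp only [tilF, Finset.mem_image, Finset.mem_filter]
  constructor
  · rintro ⟨b, ⟨h1, h2⟩, rfl⟩; exact ⟨b, ⟨h1, h2⟩, rfl⟩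
  · rintro ⟨b, ⟨h1, h2⟩, rfl⟩; exact ⟨b, ⟨h1, h2⟩, rfl⟩

theorem tilF_isDominoTiling (hF : IsPathFamily S F) : IsDominoTiling S (tilF S F) := by
  refine ⟨?_, ?_, ?_⟩
  · rintro D hD
    obtain ⟨b, ⟨hbS, hbB⟩, rfl⟩ := mem_tilF.mp hD
    exact ⟨b, partnerF F b, (partner_props hF hbS hbB).2.2, rfl⟩
  · rintro D hD x hx
    obtain ⟨b, ⟨hbS, hbB⟩, rfl⟩ := mem_tilF.mp hD
    rcases Finset.mem_insert.mp hx with rfl | hx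
    · exact hbS
    · rw [Finset.mem_singleton.mp hx]
      exact (partner_props hF hbS hbB).1
  · intro s hs
    obtain ⟨b, ⟨⟨hbS, hbB⟩, hcov⟩, huniq⟩ := cover hF s hs
    refine ⟨{b, partnerF F b}, ⟨mem_tilF.mpr ⟨b, ⟨hbS, hbB⟩, rfl⟩, ?_⟩, ?_⟩
    · rcases hcov with rfl | h
      · simp
      · rw [h]; simp
    · rintro D ⟨hD, hsD⟩
      obtain ⟨b', ⟨hb'S, hb'B⟩, rfl⟩ := mem_tilF.mp hD
      have : b' = b := by
        apply huniq
        refine ⟨⟨hb'S, hb'B⟩, ?_⟩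
        rcases Finset.mem_insert.mp hsD with rfl | h
        · exact Or.inl rfl
        · exact Or.inr (Finset.mem_singleton.mp h)
      rw [this]

end DPaux

namespace DPaux

variable {S : Finset (ℤ × ℤ)} {T : Finset (Finset (ℤ × ℤ))} {F : Finset (List (ℤ × ℤ))}

lemma adj_ne {x y : ℤ × ℤ} (h : Adj x y) : x ≠ y := by
  rintro rfl
  simp only [Adj, sub_self] at h
  rcases h with h | h | h | h <;> (rw [Prod.ext_iff] at h; simp at h)

lemma pathT_getElem {e : ℤ × ℤ} {i : ℕ} (hi : i < (pathT S T e).length) :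
    (pathT S T e)[i] = pt T e i := by
  simp only [pathT] at hi ⊢
  rw [List.getElem_map, List.getElem_range]

/-- partnerF of famT agrees with mate -/
lemma partnerF_famT (hT : IsDominoTiling S T) {b : ℤ × ℤ} (hbS : b ∈ S) (hbB : Blk b) :
    partnerF (famT S T) b = mate T b := by
  by_cases hused : usedP S T b
  · -- b is on a path
    obtain ⟨e, k, heE, hk, hall⟩ := back_trace hT _ b hused le_rfl
    have hex := exits_exist hT heE
    have hklt : k < exitT S T e := by
      rcases Nat.lt_or_ge k (exitT S T e) with h | h
      · exact h
      · exfalso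
        exact (exitT_spec hex).1 (hall _ h)
    have hmem : pathT S T e ∈ famT S T := mem_famT.mpr ⟨e, heE, rfl⟩
    have hlen : (pathT S T e).length = exitT S T e + 1 := pathT_length
    have hk1 : k + 1 < (pathT S T e).length := by omega
    have hgetk : (pathT S T e)[k]'(by omega) = b := by
      rw [pathT_getElem]; exact hk
    have := partnerF_on (famT_isPathFamily hT) hmem hk1
    rw [hgetk] at this
    rw [this, pathT_getElem hk1, pt_succ, hk]
    unfold nextFn
    ring
  · -- b is unused, hence off every path and matched to the left
    have hmate : mate T b = b - (0,1) := by
      by_contra hc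
      exact hused ⟨hbS, hbB, hc⟩
    have hoff : ¬ ∃ p ∈ famT S T, b ∈ p := by
      rintro ⟨p, hp, hbp⟩
      obtain ⟨e, heE, rfl⟩ := mem_famT.mp hp
      obtain ⟨i, hile, hpt⟩ := pathT_mem.mp hbp
      have hilt : i < exitT S T e := by
        rcases Nat.lt_or_ge i (exitT S T e) with h | h
        · exact h
        · exfalso
          have : i = exitT S T e := by omega
          rw [this] at hpt
          exact (exitT_spec (exits_exist hT heE)).1 (hpt ▸ hbS)
      exact hused (hpt ▸ pt_used hT heE hilt)
    rw [partnerF_off hoff, hmate]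

/-- round trip 1 -/
theorem tilF_famT (hT : IsDominoTiling S T) : tilF S (famT S T) = T := by
  apply Finset.ext
  intro D
  rw [mem_tilF]
  constructor
  · rintro ⟨b, ⟨hbS, hbB⟩, rfl⟩
    rw [partnerF_famT hT hbS hbB]
    exact (mate_spec hT hbS).2
  · intro hD
    obtain ⟨x, y, hxy, rfl⟩ := hT.1 D hD
    have hxS : x ∈ S := hT.2.1 _ hD (by simp)
    have hyS : y ∈ S := hT.2.1 _ hD (by simp)
    have hpar := adj_parity hxy
    have hne := adj_ne hxy
    by_cases hx : Blk x
    · refine ⟨x, ⟨hxS, hx⟩, ?_⟩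
      rw [partnerF_famT hT hxS hx, mate_eq hT hxS (Ne.symm hne) hD]
    · have hy : Blk y := by tauto
      refine ⟨y, ⟨hyS, hy⟩, ?_⟩
      rw [partnerF_famT hT hyS hy,
        mate_eq hT hyS hne (by rwa [Finset.pair_comm]), Finset.pair_comm]

/-- mate of tilF recovers path successors -/
lemma mate_tilF (hF : IsPathFamily S F) {b : ℤ × ℤ} (hbS : b ∈ S) (hbB : Blk b) :
    mate (tilF S F) b = partnerF F b := by
  have hT' := tilF_isDominoTiling hF
  apply mate_eq hT' hbS
  · intro h
    exact (partner_props hF hbS hbB).2.1 (by rw [h]; exact hbB)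
  · exact mem_tilF.mpr ⟨b, ⟨hbS, hbB⟩, rfl⟩

/-- round trip 2 -/
theorem famT_tilF (hF : IsPathFamily S F) : famT S (tilF S F) = F := by
  have hT' := tilF_isDominoTiling hF
  -- every p ∈ F equals the generated path from its head
  have key : ∀ p, ∀ hp : p ∈ F, p = pathT S (tilF S F) (p[0]'(path_pos hF hp)) := by
    intro p hp
    have hlen2 := path_len2 hF hp
    have hpt : ∀ i (hi : i < p.length), pt (tilF S F) (p[0]'(by omega)) i = p[i] := by
      intro i
      induction i with
      | zero => intro hi; rfl
      | succ m ih =>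
        intro hi
        have hmS : p[m]'(by omega) ∈ S := path_mem_S hF hp (by omega)
        have hmB : Blk (p[m]'(by omega)) := path_blk hF hp (by omega)
        rw [pt_succ, ih (by omega)]
        rw [nextFn, mate_tilF hF hmS hmB, partnerF_on hF hp (by omega : m + 1 < p.length)]
        ring
    have hex : ∃ k, pt (tilF S F) (p[0]'(by omega)) k ∉ S := by
      refine ⟨p.length - 1, ?_⟩
      rw [hpt _ (by omega)]
      exact path_last_not_S hF hp
    have hexit : exitT S (tilF S F) (p[0]'(by omega)) = p.length - 1 := by
      apply exitT_eq hex
      · rw [hpt _ (by omega)]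
        exact path_last_not_S hF hp
      · intro j hj
        rw [hpt _ (by omega)]
        exact path_mem_S hF hp (by omega)
    apply List.ext_getElem
    · rw [pathT_length, hexit]; omega
    · intro i hi1 hi2
      rw [pathT_getElem hi2, hpt _ hi1]
  apply Finset.ext
  intro p
  rw [mem_famT]
  constructor
  · rintro ⟨e, heE, rfl⟩
    obtain ⟨q, ⟨hq, hqh⟩, -⟩ := hF.2.2.1 e heE
    have hq0 : q[0]'(path_pos hF hq) = e := by
      have h0 : 0 < q.length := path_pos hF hq
      have hh2 : q.head? = q[0]? := by
        cases q with
        | nil => simp at h0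
        | cons a l => simp
      rw [hh2, List.getElem?_eq_getElem h0] at hqh
      injection hqh
    have := key q hq
    rw [hq0] at this
    rw [← this]
    exact hq
  · intro hp
    refine ⟨p[0]'(path_pos hF hp), path_head_mem hF hp, key p hp⟩

end DPaux


theorem domino_tilings_equiv_path_families (S : Finset (ℤ × ℤ)) :
    Nonempty ({T : Finset (Finset (ℤ × ℤ)) // IsDominoTiling S T}
      ≃ {F : Finset (List (ℤ × ℤ)) // IsPathFamily S F}) :=
  ⟨{ toFun := fun T => ⟨DPaux.famT S T.1, DPaux.famT_isPathFamily T.2⟩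
     invFun := fun F => ⟨DPaux.tilF S F.1, DPaux.tilF_isDominoTiling F.2⟩
     left_inv := fun T => Subtype.ext (DPaux.tilF_famT T.2)
     right_inv := fun F => Subtype.ext (DPaux.famT_tilF F.2) }⟩
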